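/- arXiv:1902.01795 — 2 statements merged into one kernel-verified Lean document; each statement's English description precedes it below -/
import Mathlib

section
/- Deodhar's Property Z: in a Coxeter group, if s is a simple reflection and w, y are elements with sw > w and sy > y, then the following are equivalent: y ≤ w, y ≤ sw, and sy ≤ sw (in the Bruhat order). -/
/-- Bruhat order on a Coxeter group, via the subword characterization: `y ≤ w` iff some
reduced word for `w` has a subword whose product is `y`. -/
def CoxeterSystem.bruhatLE {B W : Type*} [Group W] {M : CoxeterMatrix B}
    (cs : CoxeterSystem M W) (y w : W) : Prop :=
  ∃ l : List B, cs.IsReduced l ∧ cs.wordProd l = w ∧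
    ∃ l' : List B, l'.Sublist l ∧ cs.wordProd l' = y

set_option linter.unusedSectionVars false
set_option linter.unusedTactic false
set_option linter.unusedVariables false
set_option maxHeartbeats 1000000

namespace PZaux

open List CoxeterSystem

variable {B W : Type*} [Group W] {M : CoxeterMatrix B} (cs : CoxeterSystem M W)

local prefix:100 "s" => cs.simple
local prefix:100 "π" => cs.wordProd
local prefix:100 "ℓ" => cs.length

open Classical in
/-- indicator -/
noncomputable def ind (t u : W) : ZMod 2 := if u = t then 1 else 0

theorem ind_eq_one {t u : W} (h : u = t) : ind t u = 1 := by simp [ind, h]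
theorem ind_eq_zero {t u : W} (h : u ≠ t) : ind t u = 0 := by simp [ind, h]

/-- count mod 2 -/
noncomputable def cnt (t : W) (l : List W) : ZMod 2 := (l.map (ind t)).sum

@[simp] theorem cnt_nil (t : W) : cnt t [] = 0 := rfl
theorem cnt_cons (t u : W) (l : List W) : cnt t (u :: l) = ind t u + cnt t l := by
  simp [cnt]

theorem cnt_map_conj (t v : W) (l : List W) :
    cnt t (l.map (fun u => v * u * v⁻¹)) = cnt (v⁻¹ * t * v) l := by
  induction l with
  | nil => rfl
  | cons a l ih =>
    rw [map_cons, cnt_cons, cnt_cons, ih]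
    congr 1
    by_cases h : a = v⁻¹ * t * v
    · rw [ind_eq_one h, ind_eq_one]; rw [h]; group
    · rw [ind_eq_zero h, ind_eq_zero]
      intro hc
      exact h (by rw [← hc]; group)

theorem cnt_eq_zero_of_not_mem {t : W} {l : List W} (h : t ∉ l) : cnt t l = 0 := by
  induction l with
  | nil => rfl
  | cons a l ih =>
    rw [cnt_cons, ind_eq_zero (fun hc => h (by rw [← hc]; exact mem_cons_self)),
      ih (fun hc => h (mem_cons_of_mem a hc)), add_zero]

/-- The basic involution on `W × ZMod 2`. -/
noncomputable def sigFun (i : B) : W × ZMod 2 → W × ZMod 2 :=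
  fun p => (s i * p.1 * s i, p.2 + ind (s i) p.1)

theorem sigFun_invol (i : B) : Function.Involutive (sigFun cs i) := by
  intro p
  unfold sigFun
  obtain ⟨t, z⟩ := p
  simp only [Prod.mk.injEq]
  constructor
  · calc s i * (s i * t * s i) * s i = (s i * s i) * t * (s i * s i) := by group
    _ = t := by rw [cs.simple_mul_simple_self]; group
  · by_cases h : t = s i
    · rw [ind_eq_one h, ind_eq_one (by rw [h, cs.simple_mul_simple_self, one_mul])]
      rw [add_assoc]
      norm_num
      decide
    · rw [ind_eq_zero h, ind_eq_zero (fun hc => h ?_), add_zero, add_zero]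
      have := congrArg (fun x => s i * x * s i) hc
      simpa [mul_assoc, cs.simple_mul_simple_self] using
        (by calc t = (s i * s i) * t * (s i * s i) := by rw [cs.simple_mul_simple_self]; group
            _ = s i * (s i * t * s i) * s i := by group
            _ = s i * s i * s i := by rw [hc]
            _ = s i := by rw [cs.simple_mul_simple_self, one_mul])

/-- The permutation. -/
noncomputable def sig (i : B) : Equiv.Perm (W × ZMod 2) := (sigFun_invol cs i).toPerm

theorem sig_apply (i : B) (t : W) (z : ZMod 2) :
    sig cs i (t, z) = (s i * t * s i, z + ind (s i) t) := rfl

open Finset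






theorem zmod2_add_self (x : ZMod 2) : x + x = 0 := by
  rw [← two_mul]; exact mul_eq_zero_of_left (by decide) x

variable (i j : B)

theorem rho_conj (n : ℤ) : s j * (s i * s j) ^ n = (s i * s j) ^ (-n) * s j := by
  have h : s j * (s i * s j) * (s j)⁻¹ = (s i * s j)⁻¹ := by
    rw [cs.inv_simple, mul_inv_rev, cs.inv_simple, cs.inv_simple]
    calc s j * (s i * s j) * s j = s j * s i * (s j * s j) := by group
    _ = s j * s i := by rw [cs.simple_mul_simple_self]; group
  calc s j * (s i * s j) ^ n = (s j * (s i * s j) * (s j)⁻¹) ^ n * s j := by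
        rw [conj_zpow]; group
  _ = ((s i * s j)⁻¹) ^ n * s j := by rw [h]
  _ = (s i * s j) ^ (-n) * s j := by rw [inv_zpow, ← zpow_neg]

theorem sjsisj : s j * s i * s j = (s i * s j) ^ (-1 : ℤ) * s j := by
  rw [zpow_neg_one, mul_inv_rev, cs.inv_simple, cs.inv_simple]

theorem sum_shift {α : Type*} [AddCommMonoid α] (g : ℕ → α) (a b : ℕ) :
    ∑ e ∈ Finset.range (a + b), g e = ∑ e ∈ Finset.range a, g e + ∑ e ∈ Finset.range b, g (a + e) := by
  induction b with
  | zero => simp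
  | succ b ih => rw [← Nat.add_assoc, Finset.sum_range_succ, ih, Finset.sum_range_succ, add_assoc]

theorem key_sum (t : W) (m : ℕ) (hm : (s i * s j) ^ m = 1) :
    ∑ l ∈ Finset.range m, (ind ((s i * s j) ^ (-(2 * (l:ℤ))) * s j) t
      + ind ((s i * s j) ^ (-(2 * (l:ℤ)) - 1) * s j) t) = 0 := by
  set ρ := s i * s j with hρ
  set f : ℤ → ZMod 2 := fun e => ind (ρ ^ e * s j) t with hf
  have per : ∀ e : ℤ, f (e - m) = f e := by
    intro e
    have : ρ ^ (e - m) = ρ ^ e := by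
      rw [zpow_sub, zpow_natCast, hm, inv_one, mul_one]
    simp only [hf, this]
  have sub1 : ∀ k : ℕ, ∑ l ∈ Finset.range k, (f (-(2 * (l:ℤ))) + f (-(2 * (l:ℤ)) - 1))
      = ∑ e ∈ Finset.range (2 * k), f (-(e:ℤ)) := by
    intro k
    induction k with
    | zero => simp
    | succ k ih =>
      rw [Finset.sum_range_succ, ih, show 2 * (k + 1) = (2 * k + 1) + 1 from by ring,
        Finset.sum_range_succ, Finset.sum_range_succ, add_assoc]
      have e1 : -((2 * k : ℕ) : ℤ) = -(2 * (k : ℤ)) := by push_cast; ring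
      have e2 : -((2 * k + 1 : ℕ) : ℤ) = -(2 * (k : ℤ)) - 1 := by push_cast; ring
      rw [e1, e2]
  rw [sub1, two_mul, sum_shift (fun e => f (-(e:ℤ))) m m]
  have : ∀ e ∈ Finset.range m, f (-((m + e : ℕ) : ℤ)) = f (-(e:ℤ)) := by
    intro e _
    have : -((m + e : ℕ) : ℤ) = -(e:ℤ) - m := by push_cast; ring
    rw [this, per]
  rw [Finset.sum_congr rfl this]
  exact zmod2_add_self _


theorem ind_conj (v x t : W) : ind x (v * t * v⁻¹) = ind (v⁻¹ * x * v) t := by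
  by_cases h : t = v⁻¹ * x * v
  · rw [ind_eq_one h, ind_eq_one (by rw [h]; group)]
  · rw [ind_eq_zero h, ind_eq_zero]
    intro hc
    exact h (by rw [← hc]; group)

theorem sig2_apply (t : W) (z : ZMod 2) :
    (sig cs i * sig cs j) (t, z) =
      ((s i * s j) * t * (s i * s j)⁻¹, z + (ind (s j) t + ind (s j * s i * s j) t)) := by
  rw [Equiv.Perm.mul_apply, sig_apply, sig_apply]
  have h1 : s i * (s j * t * s j) * s i = (s i * s j) * t * (s i * s j)⁻¹ := by
    rw [mul_inv_rev, cs.inv_simple, cs.inv_simple]; group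
  have h2 : ind (s i) (s j * t * s j) = ind (s j * s i * s j) t := by
    have := ind_conj (s j) (s i) t
    rw [cs.inv_simple] at this
    rw [← this]
  rw [h1, h2, add_assoc]

theorem sig2_pow_apply (k : ℕ) (t : W) (z : ZMod 2) :
    ((sig cs i * sig cs j) ^ k) (t, z) =
      ((s i * s j) ^ k * t * ((s i * s j) ^ k)⁻¹,
        z + ∑ l ∈ Finset.range k, (ind ((s i * s j) ^ (-(2 * (l:ℤ))) * s j) t
          + ind ((s i * s j) ^ (-(2 * (l:ℤ)) - 1) * s j) t)) := by
  induction k with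
  | zero => simp
  | succ k ih =>
    rw [pow_succ', Equiv.Perm.mul_apply, ih, sig2_apply]
    have hc1 : ind (s j) ((s i * s j) ^ k * t * ((s i * s j) ^ k)⁻¹)
        = ind ((s i * s j) ^ (-(2 * (k:ℤ))) * s j) t := by
      rw [ind_conj]
      congr 1
      rw [← zpow_natCast (s i * s j) k, ← zpow_neg, mul_assoc,
        rho_conj cs i j (k:ℤ), ← mul_assoc, ← zpow_add]
      congr 2
      ring
    have hc2 : ind (s j * s i * s j) ((s i * s j) ^ k * t * ((s i * s j) ^ k)⁻¹)
        = ind ((s i * s j) ^ (-(2 * (k:ℤ)) - 1) * s j) t := by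
      rw [ind_conj]
      congr 1
      rw [sjsisj cs i j, ← zpow_natCast (s i * s j) k, ← zpow_neg, ← mul_assoc, ← zpow_add,
        mul_assoc, rho_conj cs i j (k:ℤ), ← mul_assoc, ← zpow_add]
      congr 2
      ring
    rw [hc1, hc2]
    rw [Prod.mk.injEq]
    constructor
    · rw [pow_succ' (s i * s j) k, mul_inv_rev]
      simp [mul_assoc]
    · rw [Finset.sum_range_succ]
      ring

theorem sig_liftable : M.IsLiftable (fun i => sig cs i) := by
  intro i j
  apply Equiv.ext
  rintro ⟨t, z⟩
  show ((sig cs i * sig cs j) ^ M i j) (t, z) = (t, z)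
  rw [sig2_pow_apply, key_sum cs i j t (M i j) (cs.simple_mul_simple_pow i j),
    cs.simple_mul_simple_pow i j, add_zero]
  simp

/-- The Tits permutation representation on `W × ZMod 2`. -/
noncomputable def phi : W →* Equiv.Perm (W × ZMod 2) := cs.lift ⟨fun i => sig cs i, sig_liftable cs⟩

@[simp] theorem phi_simple (i : B) : phi cs (s i) = sig cs i :=
  cs.lift_apply_simple (sig_liftable cs) i

theorem ind_comm (t u : W) : ind t u = ind u t := by
  by_cases h : u = t
  · rw [ind_eq_one h, ind_eq_one h.symm]
  · rw [ind_eq_zero h, ind_eq_zero (fun hc => h hc.symm)]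

theorem lis_cons (i : B) (ω : List B) :
    cs.leftInvSeq (i :: ω) = s i :: (cs.leftInvSeq ω).map (fun u => s i * u * (s i)⁻¹) := by
  show cs.leftInvSeq (i :: ω) = s i :: (cs.leftInvSeq ω).map (MulAut.conj (s i))
  rfl

theorem phi_inv_wordProd (ω : List B) (t : W) (z : ZMod 2) :
    phi cs (π ω)⁻¹ (t, z) = ((π ω)⁻¹ * t * π ω, z + cnt t (cs.leftInvSeq ω)) := by
  induction ω generalizing t z with
  | nil => simp [cnt]
  | cons i ω ih =>
    have h1 : (π (i :: ω))⁻¹ = (π ω)⁻¹ * s i := by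
      rw [cs.wordProd_cons, mul_inv_rev, cs.inv_simple]
    rw [h1, map_mul, Equiv.Perm.mul_apply, phi_simple, sig_apply, ih]
    rw [Prod.mk.injEq]
    constructor
    · rw [cs.wordProd_cons]
      group
    · rw [lis_cons, cnt_cons, cnt_map_conj, cs.inv_simple, ind_comm]
      ring

theorem cnt_lis_eq {ω₁ ω₂ : List B} (h : π ω₁ = π ω₂) (t : W) :
    cnt t (cs.leftInvSeq ω₁) = cnt t (cs.leftInvSeq ω₂) := by
  have e1 := phi_inv_wordProd cs ω₁ t 0
  have e2 := phi_inv_wordProd cs ω₂ t 0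
  rw [h] at e1
  have := e1.symm.trans e2
  have := congrArg Prod.snd this
  simpa using this

/-- parity function -/
noncomputable def nu (u t : W) : ZMod 2 := (phi cs u (t, 0)).2

theorem phi_eq (u t : W) (z : ZMod 2) :
    phi cs u (t, z) = (u * t * u⁻¹, z + nu cs u t) := by
  obtain ⟨ω, hω⟩ := cs.wordProd_surjective u⁻¹
  have hu : u = (π ω)⁻¹ := by rw [hω]; group
  subst hu
  rw [phi_inv_wordProd]
  have : nu cs (π ω)⁻¹ t = cnt t (cs.leftInvSeq ω) := by
    unfold nu
    rw [phi_inv_wordProd, zero_add]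
  rw [this, inv_inv]

theorem phi_refl_self {t : W} (ht : cs.IsReflection t) (z : ZMod 2) :
    phi cs t (t, z) = (t, z + 1) := by
  obtain ⟨w, i, rfl⟩ := ht
  set t := w * s i * w⁻¹ with hts
  have hwt : w⁻¹ * t * w = s i := by rw [hts]; group
  set a := nu cs w⁻¹ t with ha
  set b := nu cs w (s i) with hb
  have h1 : phi cs w⁻¹ (t, z) = (s i, z + a) := by
    rw [phi_eq, inv_inv, hwt]
  have h2 : phi cs w (s i, z + a) = (t, z + a + b) := by rw [phi_eq, hts]
  have hab : a + b = 0 := by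
    have := congrArg (fun f => (f (t, z)).2) (map_mul (phi cs) w w⁻¹)
    simp only [Equiv.Perm.mul_apply] at this
    rw [h1, h2, mul_inv_cancel, map_one] at this
    have : z = z + a + b := by simpa using this
    have : z + 0 = z + (a + b) := by rw [add_zero, ← add_assoc]; exact this
    exact (add_left_cancel this).symm
  have h3 : phi cs t (t, z) = (t, z + a + 1 + b) := by
    have hmul : phi cs t = phi cs w * (phi cs (s i) * phi cs w⁻¹) := by
      rw [← map_mul, ← map_mul]
      congr 1
      rw [hts]; group
    rw [hmul, Equiv.Perm.mul_apply, Equiv.Perm.mul_apply, h1, phi_simple, sig_apply,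
      ind_eq_one rfl]
    have : s i * s i * s i = s i := by rw [cs.simple_mul_simple_self, one_mul]
    rw [show s i * (s i) * s i = s i from this]
    rw [phi_eq, hts]
  rw [h3]
  congr 1
  calc z + a + 1 + b = z + 1 + (a + b) := by ring
  _ = z + 1 := by rw [hab, add_zero]

theorem mem_lis_of_left_inversion {ω : List B} (hω : cs.IsReduced ω) {t : W}
    (ht : cs.IsReflection t) (hlt : ℓ (t * π ω) < ℓ (π ω)) : t ∈ cs.leftInvSeq ω := by
  by_contra hmem
  have h0 : cnt t (cs.leftInvSeq ω) = 0 := cnt_eq_zero_of_not_mem hmem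
  obtain ⟨μ, hμred, hμ⟩ := cs.exists_reduced_word' (t * π ω)
  have e2 : (π μ)⁻¹ = (π ω)⁻¹ * t := by
    rw [← hμ, mul_inv_rev, ht.inv]
  have e1 : phi cs ((π ω)⁻¹ * t) (t, 0) = ((π μ)⁻¹ * t * π μ, cnt t (cs.leftInvSeq μ)) := by
    rw [← e2, phi_inv_wordProd, zero_add]
  have e3 : phi cs ((π ω)⁻¹ * t) (t, 0) = ((π ω)⁻¹ * t * π ω, 1) := by
    rw [map_mul, Equiv.Perm.mul_apply, phi_refl_self cs ht, phi_inv_wordProd, h0, add_zero,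
      zero_add, mul_assoc]
  have e4 : cnt t (cs.leftInvSeq μ) = 1 := by
    have := congrArg Prod.snd (e1.symm.trans e3)
    simpa using this
  have e5 : t ∈ cs.leftInvSeq μ := by
    by_contra hc
    rw [cnt_eq_zero_of_not_mem hc] at e4
    exact absurd e4 (by decide)
  have e6 := cs.isLeftInversion_of_mem_leftInvSeq hμred e5
  have e7 : ℓ (t * π μ) < ℓ (π μ) := e6.2
  rw [← hμ, ← mul_assoc, ht.mul_self, one_mul] at e7
  omega

theorem strong_exchange_left {ω : List B} (hω : cs.IsReduced ω) {t : W}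
    (ht : cs.IsReflection t) (hlt : ℓ (t * π ω) < ℓ (π ω)) :
    ∃ ω', ω'.Sublist ω ∧ π ω' = t * π ω ∧ ω'.length + 1 = ω.length := by
  have hmem := mem_lis_of_left_inversion cs hω ht hlt
  obtain ⟨j, hj, hget⟩ := List.getElem_of_mem hmem
  rw [cs.length_leftInvSeq] at hj
  refine ⟨ω.eraseIdx j, List.eraseIdx_sublist ω j, ?_, ?_⟩
  · rw [← cs.getD_leftInvSeq_mul_wordProd ω j]
    congr 1
    rw [← hget, List.getD_eq_getElem]
  · rw [List.length_eraseIdx_add_one hj]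

theorem strong_exchange_right {ω : List B} (hω : cs.IsReduced ω) {t : W}
    (ht : cs.IsReflection t) (hlt : ℓ (π ω * t) < ℓ (π ω)) :
    ∃ ω', ω'.Sublist ω ∧ π ω' = π ω * t ∧ ω'.length + 1 = ω.length := by
  have hrev : cs.IsReduced ω.reverse := (cs.isReduced_reverse_iff ω).mpr hω
  have hl : ℓ (t * π ω.reverse) < ℓ (π ω.reverse) := by
    rw [cs.wordProd_reverse]
    have : t * (π ω)⁻¹ = (π ω * t)⁻¹ := by rw [mul_inv_rev, ht.inv]
    rw [this, cs.length_inv, cs.length_inv]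
    exact hlt
  obtain ⟨β, hsub, hprod, hlen⟩ := strong_exchange_left cs hrev ht hl
  refine ⟨β.reverse, ?_, ?_, ?_⟩
  · have := hsub.reverse
    rwa [List.reverse_reverse] at this
  · rw [cs.wordProd_reverse, hprod, cs.wordProd_reverse, mul_inv_rev, inv_inv, ht.inv]
  · rw [List.length_reverse]
    rw [List.length_reverse] at hlen
    exact hlen

theorem deletion (ω : List B) : ∃ ω', ω'.Sublist ω ∧ π ω' = π ω ∧ cs.IsReduced ω' := by
  induction ω with
  | nil => exact ⟨[], List.Sublist.refl _, rfl, by simp [CoxeterSystem.IsReduced]⟩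
  | cons i α ih =>
    obtain ⟨α', hsub, hprod, hred⟩ := ih
    by_cases h : ℓ (s i * π α') < ℓ (π α')
    · obtain ⟨β, hbsub, hbprod, hblen⟩ :=
        strong_exchange_left cs hred (cs.isReflection_simple i) h
      refine ⟨β, hbsub.trans (hsub.trans (List.sublist_cons_self i α)), ?_, ?_⟩
      · rw [hbprod, hprod, cs.wordProd_cons]
      · show ℓ (π β) = β.length
        have h1 : ℓ (π α') = α'.length := hred
        rcases cs.length_simple_mul (π α') i with hc | hc
        · omega
        · rw [hbprod]; omega
    · have h2 : ℓ (s i * π α') = ℓ (π α') + 1 := by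
        rcases cs.length_simple_mul (π α') i with hc | hc
        · exact hc
        · omega
      refine ⟨i :: α', hsub.cons₂ i, ?_, ?_⟩
      · rw [cs.wordProd_cons, cs.wordProd_cons, hprod]
      · show ℓ (π (i :: α')) = (i :: α').length
        have h1 : ℓ (π α') = α'.length := hred
        rw [cs.wordProd_cons, h2]
        simp [h1]

/-- A single Bruhat step. -/
def brel (u v : W) : Prop := ∃ t, cs.IsReflection t ∧ v = u * t ∧ ℓ u < ℓ v

/-- Bruhat order via chains of reflections. -/
def br : W → W → Prop := Relation.ReflTransGen (brel cs)

theorem brel_mul_left {u t : W} (ht : cs.IsReflection t) (h : ℓ u < ℓ (t * u)) :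
    brel cs u (t * u) :=
  ⟨u⁻¹ * t * u, by simpa using ht.conj u⁻¹, by group, h⟩

theorem ss_core {u w t : W} (ht : cs.IsReflection t) (hw : w = u * t) (hlt : ℓ u < ℓ w)
    (i : B) (hsw : ℓ (s i * w) < ℓ w) : ℓ (s i * u) < ℓ (s i * w) ∨ s i * u = w := by
  by_cases hcase : ℓ (s i * u) < ℓ (s i * w)
  · exact Or.inl hcase
  right
  obtain ⟨μ, hμred, hμ⟩ := cs.exists_reduced_word' (s i * w)
  have hμ' : π μ = s i * w := hμ.symm
  have hμlen : ℓ (s i * w) = μ.length := by rw [hμ]; exact hμred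
  have hπiμ : π (i :: μ) = w := by
    rw [cs.wordProd_cons, hμ', cs.simple_mul_simple_cancel_left]
  have hred2 : cs.IsReduced (i :: μ) := by
    show ℓ (π (i :: μ)) = (i :: μ).length
    rw [hπiμ]
    simp only [List.length_cons]
    rcases cs.length_simple_mul w i with h | h <;> omega
  have hwt : ℓ (π (i :: μ) * t) < ℓ (π (i :: μ)) := by
    rw [hπiμ]
    have : w * t = u := by rw [hw, mul_assoc, ht.mul_self, mul_one]
    rw [this]
    exact hlt
  obtain ⟨γ, hγsub, hγprod, hγlen⟩ := strong_exchange_right cs hred2 ht hwt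
  rw [hπiμ, hw, mul_assoc, ht.mul_self, mul_one] at hγprod
  simp only [List.length_cons] at hγlen
  rcases List.sublist_cons_iff.mp hγsub with hγμ | ⟨r, rfl, hr⟩
  · have : γ = μ := hγμ.eq_of_length (by omega)
    rw [← hγprod, this, hμ', cs.simple_mul_simple_cancel_left]
  · exfalso
    have hπr : π r = s i * u := by
      rw [← cs.simple_mul_simple_cancel_left (w := π r) i, ← cs.wordProd_cons, hγprod]
    have : ℓ (s i * u) ≤ r.length := by
      rw [← hπr]; exact cs.length_wordProd_le r
    simp only [List.length_cons] at hγlen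
    omega

theorem ss_a {u w t : W} (ht : cs.IsReflection t) (hw : w = u * t) (hlt : ℓ u < ℓ w)
    (i : B) (hsu : ℓ u < ℓ (s i * u)) (hsw : ℓ w < ℓ (s i * w)) :
    brel cs (s i * u) (s i * w) := by
  refine ⟨t, ht, by rw [hw, mul_assoc], ?_⟩
  have h1 : ℓ (s i * u) = ℓ u + 1 := by rcases cs.length_simple_mul u i with h | h <;> omega
  have h2 : ℓ (s i * w) = ℓ w + 1 := by rcases cs.length_simple_mul w i with h | h <;> omega
  omega

theorem ss_b {u w t : W} (ht : cs.IsReflection t) (hw : w = u * t) (hlt : ℓ u < ℓ w)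
    (i : B) (hsu : ℓ (s i * u) < ℓ u) (hsw : ℓ (s i * w) < ℓ w) :
    brel cs (s i * u) (s i * w) := by
  refine ⟨t, ht, by rw [hw, mul_assoc], ?_⟩
  have h1 : ℓ (s i * u) + 1 = ℓ u := by rcases cs.length_simple_mul u i with h | h <;> omega
  have h2 : ℓ (s i * w) + 1 = ℓ w := by rcases cs.length_simple_mul w i with h | h <;> omega
  omega

theorem ss_c {u w t : W} (ht : cs.IsReflection t) (hw : w = u * t) (hlt : ℓ u < ℓ w)
    (i : B) (hsu : ℓ u < ℓ (s i * u)) (hsw : ℓ (s i * w) < ℓ w) :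
    br cs (s i * u) w ∧ br cs u (s i * w) := by
  rcases ss_core cs ht hw hlt i hsw with hc | hc
  · have hb1 : brel cs (s i * u) (s i * w) := ⟨t, ht, by rw [hw, mul_assoc], hc⟩
    have hb2 : brel cs (s i * w) w := by
      have h2 : ℓ (s i * w) < ℓ (s i * (s i * w)) := by
        rw [cs.simple_mul_simple_cancel_left]; exact hsw
      have := brel_mul_left cs (cs.isReflection_simple i) h2
      rwa [cs.simple_mul_simple_cancel_left] at this
    have hb3 : brel cs u (s i * u) := brel_mul_left cs (cs.isReflection_simple i) hsu
    exact ⟨Relation.ReflTransGen.trans (Relation.ReflTransGen.single hb1)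
        (Relation.ReflTransGen.single hb2),
      Relation.ReflTransGen.trans (Relation.ReflTransGen.single hb3)
        (Relation.ReflTransGen.single hb1)⟩
  · constructor
    · rw [hc]; exact Relation.ReflTransGen.refl
    · have h5 : u = s i * w := by rw [← hc, cs.simple_mul_simple_cancel_left]
      rw [← h5]; exact Relation.ReflTransGen.refl

theorem zz {u w : W} (h : br cs u w) (i : B) :
    (ℓ u < ℓ (s i * u) → ℓ w < ℓ (s i * w) → br cs (s i * u) (s i * w)) ∧
    (ℓ u < ℓ (s i * u) → ℓ (s i * w) < ℓ w → br cs (s i * u) w ∧ br cs u (s i * w)) := by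
  induction h with
  | refl =>
    constructor
    · intro _ _; exact Relation.ReflTransGen.refl
    · intro h1 h2; omega
  | @tail v w hb hc ih =>
    obtain ⟨t, ht, hw, hlt⟩ := hc
    constructor
    · intro hsu hsw
      rcases (cs.length_simple_mul_ne v i).lt_or_gt with hsv | hsv
      · obtain ⟨h1, _⟩ := ih.2 hsu hsv
        have hb2 : brel cs v w := ⟨t, ht, hw, hlt⟩
        have hb3 : brel cs w (s i * w) := brel_mul_left cs (cs.isReflection_simple i) hsw
        exact ((h1.tail hb2).tail hb3)
      · have h1 := ih.1 hsu hsv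
        exact h1.tail (ss_a cs ht hw hlt i hsv hsw)
    · intro hsu hsw
      rcases (cs.length_simple_mul_ne v i).lt_or_gt with hsv | hsv
      · obtain ⟨h1, h2⟩ := ih.2 hsu hsv
        have hb2 : brel cs v w := ⟨t, ht, hw, hlt⟩
        exact ⟨h1.tail hb2, h2.tail (ss_b cs ht hw hlt i hsv hsw)⟩
      · have h1 := ih.1 hsu hsv
        obtain ⟨h2, h3⟩ := ss_c cs ht hw hlt i hsv hsw
        exact ⟨Relation.ReflTransGen.trans h1 h2, Relation.ReflTransGen.trans hb h3⟩

theorem subword_br : ∀ ω ω' : List B, cs.IsReduced ω → ω'.Sublist ω → cs.IsReduced ω' →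
    br cs (π ω') (π ω) := by
  intro ω
  induction ω with
  | nil =>
    intro ω' _ hs _
    rw [List.sublist_nil.mp hs]
    exact Relation.ReflTransGen.refl
  | cons i α ih =>
    intro ω' hred hsub hred'
    have hared : cs.IsReduced α := by
      have := CoxeterSystem.IsReduced.drop (ω := i :: α) hred (j := 1)
      simpa using this
    have hlen : ℓ (π (i :: α)) = α.length + 1 := by
      have : ℓ (π (i :: α)) = (i :: α).length := hred
      simpa using this
    have halen : ℓ (π α) = α.length := hared
    have hstep : brel cs (π α) (π (i :: α)) := by
      have h2 : ℓ (π α) < ℓ (s i * π α) := by rw [← cs.wordProd_cons]; omega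
      have := brel_mul_left cs (cs.isReflection_simple i) h2
      rwa [← cs.wordProd_cons] at this
    rcases List.sublist_cons_iff.mp hsub with h | ⟨r, rfl, hr⟩
    · exact (ih ω' hared h hred').tail hstep
    · have hrred : cs.IsReduced r := by
        have := CoxeterSystem.IsReduced.drop (ω := i :: r) hred' (j := 1)
        simpa using this
      have h1 : br cs (π r) (π α) := ih r hared hr hrred
      have hru : ℓ (π r) < ℓ (s i * π r) := by
        have e1 : ℓ (π (i :: r)) = r.length + 1 := by
          have : ℓ (π (i :: r)) = (i :: r).length := hred'
          simpa using this
        have e2 : ℓ (π r) = r.length := hrred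
        rw [← cs.wordProd_cons]
        omega
      have hrw : ℓ (π α) < ℓ (s i * π α) := by rw [← cs.wordProd_cons]; omega
      have := (zz cs h1 i).1 hru hrw
      rwa [← cs.wordProd_cons, ← cs.wordProd_cons] at this

theorem br_subword {u w : W} (h : br cs u w) :
    ∀ ω : List B, cs.IsReduced ω → π ω = w → ∃ ω', ω'.Sublist ω ∧ π ω' = u := by
  induction h with
  | refl => intro ω _ hπ; exact ⟨ω, List.Sublist.refl _, hπ⟩
  | @tail v w hb hc ih =>
    intro ω hred hπ
    obtain ⟨t, ht, hw, hlt⟩ := hc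
    have hvt : π ω * t = v := by rw [hπ, hw, mul_assoc, ht.mul_self, mul_one]
    have hlt2 : ℓ (π ω * t) < ℓ (π ω) := by rw [hvt, hπ]; exact hlt
    obtain ⟨β, hsubβ, hβ, _⟩ := strong_exchange_right cs hred ht hlt2
    obtain ⟨β', hsubβ', hβ', hβred⟩ := deletion cs β
    have hβ'v : π β' = v := by rw [hβ', hβ, hvt]
    obtain ⟨γ, hsubγ, hγ⟩ := ih β' hβred hβ'v
    exact ⟨γ, hsubγ.trans (hsubβ'.trans hsubβ), hγ⟩

theorem bruhatLE_iff_br (y w : W) : cs.bruhatLE y w ↔ br cs y w := by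
  constructor
  · rintro ⟨l, hred, hlw, l', hsub, hl'⟩
    obtain ⟨l'', hsub'', hprod'', hred''⟩ := deletion cs l'
    have := subword_br cs l l'' hred (hsub''.trans hsub) hred''
    rwa [hprod'', hl', hlw] at this
  · intro h
    obtain ⟨ω, hred, hw⟩ := cs.exists_reduced_word' w
    obtain ⟨ω', hsub, hy⟩ := br_subword cs h ω hred hw.symm
    exact ⟨ω, hred, hw.symm, ω', hsub, hy⟩

end PZaux

/-- Deodhar's Property Z: in a Coxeter group, if `s` is a simple reflection and `w, y`
are elements with `sw > w` and `sy > y`, then the following are equivalent: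
`y ≤ w`, `y ≤ sw`, and `sy ≤ sw` (in the Bruhat order). -/
theorem deodhar_property_Z {B W : Type*} [Group W] {M : CoxeterMatrix B}
    (cs : CoxeterSystem M W) (i : B) (w y : W)
    (hw : cs.length w < cs.length (cs.simple i * w))
    (hy : cs.length y < cs.length (cs.simple i * y)) :
    (cs.bruhatLE y w ↔ cs.bruhatLE y (cs.simple i * w)) ∧
    (cs.bruhatLE y (cs.simple i * w) ↔ cs.bruhatLE (cs.simple i * y) (cs.simple i * w)) := by
  rw [PZaux.bruhatLE_iff_br, PZaux.bruhatLE_iff_br, PZaux.bruhatLE_iff_br]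
  have h2 : cs.length (cs.simple i * (cs.simple i * w)) < cs.length (cs.simple i * w) := by
    rw [cs.simple_mul_simple_cancel_left]; exact hw
  constructor
  · constructor
    · intro h
      exact h.tail (PZaux.brel_mul_left cs (cs.isReflection_simple i) hw)
    · intro h
      have h3 := ((PZaux.zz cs h i).2 hy h2).2
      rwa [cs.simple_mul_simple_cancel_left] at h3
  · constructor
    · intro h
      exact ((PZaux.zz cs h i).2 hy h2).1
    · intro h
      exact (Relation.ReflTransGen.single
        (PZaux.brel_mul_left cs (cs.isReflection_simple i) hy)).trans h
end

section
/- In any state of the colored five-vertex model, the coloring of a state is uniquely determined by the uncolored state: given an admissible uncolored state with prescribed colors on the top boundary − spins, there is exactly one way to assign colors to all interior − spins consistent with the admissible colored vertex configurations. Consequently the uncolored ensemble decomposes as a disjoint union of the colored ensembles over w ∈ S_r, and Z(S_{z,λ}) = Σ_{w ∈ S_r} Z(S_{z,λ,w}). -/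
abbrev LP (r : ℕ) := AddMonoidAlgebra ℚ (Fin r → ℤ)

noncomputable def mono {r : ℕ} (μ : Fin r → ℤ) : LP r := AddMonoidAlgebra.single μ (1 : ℚ)

/-- The simple reflection `s_i` of `S_r`, swapping `i` and `i+1` (0-based). -/
def sPerm (r i : ℕ) : Equiv.Perm (Fin r) :=
  if h : i + 1 < r then Equiv.swap ⟨i, Nat.lt_of_succ_lt h⟩ ⟨i + 1, h⟩ else 1

/-- The simple root `α_i = e_i - e_{i+1}`. -/
def alph (r i : ℕ) : Fin r → ℤ :=
  if h : i + 1 < r then Pi.single ⟨i, Nat.lt_of_succ_lt h⟩ 1 - Pi.single ⟨i + 1, h⟩ 1 else 0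

/-- The pairing `⟨μ, α_i^∨⟩ = μ_i - μ_{i+1}`. -/
def pair (r i : ℕ) (μ : Fin r → ℤ) : ℤ :=
  if h : i + 1 < r then μ ⟨i, Nat.lt_of_succ_lt h⟩ - μ ⟨i + 1, h⟩ else 0

/-- The isobaric Demazure operator `∂_i` on the monomial `z^μ`, given by the standard
explicit formula equivalent to `∂_i f(z) = (f(z) - z^{-α_i} f(s_i z))/(1 - z^{-α_i})`. -/
noncomputable def demMono (r i : ℕ) (μ : Fin r → ℤ) : LP r :=
  if 0 ≤ pair r i μ then ∑ t ∈ Finset.range ((pair r i μ).toNat + 1), mono (μ - t • alph r i)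
  else if pair r i μ = -1 then 0
  else -∑ t ∈ Finset.range ((-pair r i μ).toNat - 1), mono (μ + (t + 1) • alph r i)

/-- The isobaric Demazure operator `∂_i` on Laurent polynomials, extended linearly. -/
noncomputable def dem (r i : ℕ) (f : LP r) : LP r :=
  Finsupp.sum f.coeff fun μ c => c • demMono r i μ

/-- The modified Demazure operator `∂°_i = ∂_i - 1`. -/
noncomputable def demC (r i : ℕ) (f : LP r) : LP r := dem r i f - f

/-- The action of `s_i` on Laurent polynomials: `(s_i f)(z) = f(s_i z)`. -/
noncomputable def sAct (r i : ℕ) (f : LP r) : LP r :=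
  AddMonoidAlgebra.mapDomain (fun μ => μ ∘ (sPerm r i)) f

/-- `∂_w = ∂_{i_1} ⋯ ∂_{i_k}` along a word `(i_1, …, i_k)`. -/
noncomputable def demWord (r : ℕ) : List ℕ → LP r → LP r
  | [], f => f
  | i :: l, f => dem r i (demWord r l f)

/-- `∂°_w = ∂°_{i_1} ⋯ ∂°_{i_k}` along a word `(i_1, …, i_k)`. -/
noncomputable def demCWord (r : ℕ) : List ℕ → LP r → LP r
  | [], f => f
  | i :: l, f => demC r i (demCWord r l f)

/-- All letters of the word are valid indices of simple reflections of `S_r`. -/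
def OKWord (r : ℕ) (l : List ℕ) : Prop := ∀ i ∈ l, i + 1 < r

def wordProd (r : ℕ) (l : List ℕ) : Equiv.Perm (Fin r) := (l.map (sPerm r)).prod

/-- Coxeter length of a permutation. -/
noncomputable def len (r : ℕ) (w : Equiv.Perm (Fin r)) : ℕ :=
  sInf {n | ∃ l : List ℕ, OKWord r l ∧ wordProd r l = w ∧ l.length = n}

/-- `l` is a reduced word. -/
def Reduced (r : ℕ) (l : List ℕ) : Prop :=
  OKWord r l ∧ l.length = len r (wordProd r l)

/-- Bruhat order on `S_r`, via the subword characterization. -/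
def bruhatLE (r : ℕ) (y w : Equiv.Perm (Fin r)) : Prop :=
  ∃ l : List ℕ, Reduced r l ∧ wordProd r l = w ∧
    ∃ l' : List ℕ, l'.Sublist l ∧ wordProd r l' = y

/-- The Young diagram of a partition `λ` with at most `r` parts. -/
noncomputable def lamDiag {r : ℕ} (lam : Fin r → ℕ)
    (h : (List.ofFn lam).Pairwise (· ≥ ·)) : YoungDiagram :=
  YoungDiagram.ofRowLens (List.ofFn lam) (List.sortedGE_iff_pairwise.mpr h)

/-- The number of entries `< m` in row `j` of the tableau `T`; since rows weakly
increase, this is the length of row `j` of the tableau obtained from `T` by deleting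
all entries `≥ m`. -/
def cntLt {μ : YoungDiagram} (T : SemistandardYoungTableau μ) (j m : ℕ) : ℕ :=
  ((Finset.range (μ.rowLen j)).filter (fun k => T j k < m)).card

/-- The weight of a tableau: `wtT T m` is the number of entries equal to `m`.
(Entries are 0-based: the letter `m ∈ {0, …, r-1}` corresponds to `m+1 ∈ {1, …, r}`.) -/
def wtT {μ : YoungDiagram} (T : SemistandardYoungTableau μ) (m : ℕ) : ℕ :=
  (μ.cells.filter (fun c => T c.1 c.2 = m)).card

/-- A Gelfand-Tsetlin pattern with `r` rows and top row `λ`: a triangular array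
`(a i j)`, rows `i = 0, …, r-1` (from the top), with `a i j` defined for
`i ≤ j ≤ r-1` (and normalized to `0` outside the triangle), top row `λ`, and the
interlacing inequalities `a i j ≥ a (i+1) (j+1) ≥ a i (j+1)`. -/
structure GTPattern (r : ℕ) (lam : Fin r → ℕ) where
  a : ℕ → ℕ → ℕ
  top : ∀ j : Fin r, a 0 (j : ℕ) = lam j
  interlace : ∀ i j : ℕ, i ≤ j → j + 1 < r →
    a (i + 1) (j + 1) ≤ a i j ∧ a i (j + 1) ≤ a (i + 1) (j + 1)
  outside : ∀ i j : ℕ, ¬(i ≤ j ∧ j < r) → a i j = 0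

/-- The sum of the `i`-th row of a Gelfand-Tsetlin pattern. -/
def GTPattern.rowSum {r : ℕ} {lam : Fin r → ℕ} (P : GTPattern r lam) (i : ℕ) : ℕ :=
  ∑ j ∈ Finset.Ico i r, P.a i j

/-- `true` = spin −, `false` = spin +.  The admissible five-vertex configurations
`(left, top, right, bottom)`: spin is conserved, and the type-`b₁` configuration
`(+,−,+,−)` is forbidden.  This leaves exactly the five configurations
`(+,+,+,+)`, `(−,−,−,−)`, `(−,+,−,+)`, `(−,+,+,−)`, `(+,−,−,+)`. -/
def admU (a b c d : Bool) : Prop :=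
  ((if a then 1 else 0) + (if b then 1 else 0) : ℕ)
      = (if c then 1 else 0) + (if d then 1 else 0) ∧
  ¬(a = false ∧ b = true ∧ c = false ∧ d = true)

/-- A state of the uncolored five-vertex model `S_{z,λ}`: a grid with rows
`0, …, r-1` (top to bottom) and columns labeled `0, …, N` from *right to left*.
`V i j` is the spin on the vertical edge in column (label) `j` between row `i-1`
and row `i` (`V 0` is the top boundary, `V r` the bottom); `H i k` is the spin on
the `k`-th horizontal edge of row `i`, counted from the left (`H i 0` is the left
boundary, `H i (N+1)` the right boundary).  The vertex of row `i` and column label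
`j` has left edge `H i (N-j)`, top edge `V i j`, right edge `H i (N-j+1)` and
bottom edge `V (i+1) j`.  Boundary conditions: the top boundary has `−` exactly in
the columns labeled `λ_i + r - 1 - i` (0-based `i`), the left and bottom boundary
are `+`, the right boundary is `−`. -/
structure UState (r N : ℕ) (lam : Fin r → ℕ) where
  V : Fin (r + 1) → Fin (N + 1) → Bool
  H : Fin r → Fin (N + 2) → Bool
  top : ∀ j : Fin (N + 1), V 0 j = true ↔ ∃ i : Fin r, (j : ℕ) = lam i + (r - 1 - (i : ℕ))
  bottom : ∀ j, V (Fin.last r) j = false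
  left : ∀ i, H i 0 = false
  right : ∀ i, H i (Fin.last (N + 1)) = true
  adm : ∀ (i : Fin r) (j : Fin (N + 1)),
    admU (H i ⟨N - (j : ℕ), by omega⟩) (V i.castSucc j)
      (H i ⟨N - (j : ℕ) + 1, by omega⟩) (V i.succ j)

/-- The Boltzmann weight of a state: a vertex in row `i` contributes `z_i` exactly
when the spin on the edge to its left is `−`, otherwise `1`. -/
noncomputable def uweight {r N : ℕ} {lam : Fin r → ℕ} (s : UState r N lam) : LP r :=
  ∏ i : Fin r, ∏ k : Fin (N + 1),
    if s.H i k.castSucc then mono (Pi.single i 1) else 1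

/-- The partition function of the uncolored five-vertex model. -/
noncomputable def Zpart (r N : ℕ) (lam : Fin r → ℕ) : LP r :=
  ∑ᶠ s : UState r N lam, uweight s

/-- The Weyl vector `ρ = (r-1, r-2, …, 0)`. -/
def rhoWt (r : ℕ) : Fin r → ℤ := fun i => ((r - 1 - (i : ℕ) : ℕ) : ℤ)

/-- The Schur polynomial `s_λ(z_1, …, z_r)` as a Laurent polynomial, via its
combinatorial definition: the sum of `z^{wt T}` over semistandard Young tableaux of
shape `λ` with entries in `{1, …, r}` (0-based: entries `< r`). -/
noncomputable def schurL (r : ℕ) (μ : YoungDiagram) : LP r :=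
  ∑ᶠ T : {T : SemistandardYoungTableau μ // ∀ c ∈ μ.cells, T.1 c.1 c.2 < r},
    mono fun i => (wtT T.1 (i : ℕ) : ℤ)

/-- Colored spins: `none` is the spin `+`, and `some c` is a `−` spin carrying the
colour `c_{c+1}` (0-based `c`); the colours are ordered `c_1 > c_2 > ⋯ > c_r`, so a
*smaller* index means a *larger* colour.  Admissible colored configurations
`(left, top, right, bottom)`: type `a₁` (all `+`); type `a₂` (left and top colored,
the larger colour exits right and the smaller colour exits bottom — in indices,
right is the `min` and bottom is the `max`); types `b₂`/`c₁` (colored path entering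
on the left and exiting right or bottom); type `c₂` (entering on top and exiting
right).  The type-`b₁` configuration (entering on top and exiting bottom with `+`
horizontally) is forbidden, as is everything else. -/
def admC (r : ℕ) (a b c d : Option (Fin r)) : Prop :=
  (a = none ∧ b = none ∧ c = none ∧ d = none) ∨
  (∃ x y : Fin r, a = some x ∧ b = some y ∧ c = some (min x y) ∧ d = some (max x y)) ∨
  (∃ x : Fin r, a = some x ∧ b = none ∧
    ((c = some x ∧ d = none) ∨ (c = none ∧ d = some x))) ∨
  (∃ x : Fin r, a = none ∧ b = some x ∧ c = some x ∧ d = none)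

/-- A state of the colored five-vertex model `S_{z,λ,w}`; grid coordinates as in the
uncolored model.  Boundary conditions: the top boundary carries colour `c_{i+1}`
(i.e. `some i`) exactly in the column labeled `λ_i + r - 1 - i` (0-based `i`); the
right boundary carries, from top to bottom, the colours `w c` (row `i` carries
`some (w⁻¹ i)`); all other boundary edges are `+`. -/
structure CState (r N : ℕ) (lam : Fin r → ℕ) (w : Equiv.Perm (Fin r)) where
  V : Fin (r + 1) → Fin (N + 1) → Option (Fin r)
  H : Fin r → Fin (N + 2) → Option (Fin r)
  top : ∀ (i : Fin r) (j : Fin (N + 1)),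
    V 0 j = some i ↔ (j : ℕ) = lam i + (r - 1 - (i : ℕ))
  bottom : ∀ j, V (Fin.last r) j = none
  left : ∀ i, H i 0 = none
  right : ∀ i : Fin r, H i (Fin.last (N + 1)) = some (w⁻¹ i)
  adm : ∀ (i : Fin r) (j : Fin (N + 1)),
    admC r (H i ⟨N - (j : ℕ), by omega⟩) (V i.castSucc j)
      (H i ⟨N - (j : ℕ) + 1, by omega⟩) (V i.succ j)

/-- The Boltzmann weight of a colored state: a vertex in row `i` contributes `z_i`
exactly when the edge to its left is colored, otherwise `1`. -/
noncomputable def cweight {r N : ℕ} {lam : Fin r → ℕ} {w : Equiv.Perm (Fin r)}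
    (s : CState r N lam w) : LP r :=
  ∏ i : Fin r, ∏ k : Fin (N + 1),
    if (s.H i k.castSucc).isSome then mono (Pi.single i 1) else 1

/-- The partition function of the colored five-vertex model `S_{z,λ,w}`. -/
noncomputable def Zcol (r N : ℕ) (lam : Fin r → ℕ) (w : Equiv.Perm (Fin r)) : LP r :=
  ∑ᶠ s : CState r N lam w, cweight s

/-- The colored state `sc` projects to the uncolored state `s` upon forgetting the
colours (a colored spin becomes `−`, i.e. `true`). -/
def Uncolors {r N : ℕ} {lam : Fin r → ℕ} {w : Equiv.Perm (Fin r)}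
    (sc : CState r N lam w) (s : UState r N lam) : Prop :=
  (∀ i j, (sc.V i j).isSome = s.V i j) ∧ (∀ i k, (sc.H i k).isSome = s.H i k)


section ColorAux

open Finset

/-- Colour of the right edge of a vertex, given the left and top colours and the
uncoloured spin of the right edge. -/
def rightCol {r : ℕ} : Option (Fin r) → Option (Fin r) → Bool → Option (Fin r)
  | some x, some y, _ => some (min x y)
  | some x, none, sp => if sp then some x else none
  | none, some y, _ => some y
  | none, none, _ => none

/-- Colour of the bottom edge of a vertex. -/
def bottomCol {r : ℕ} : Option (Fin r) → Option (Fin r) → Bool → Option (Fin r)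
  | some x, some y, _ => some (max x y)
  | some x, none, sp => if sp then none else some x
  | none, _, _ => none

lemma col_isSome {r : ℕ} {a b : Option (Fin r)} {spL spT spR spB : Bool}
    (ha : a.isSome = spL) (hb : b.isSome = spT) (hadm : admU spL spT spR spB) :
    (rightCol a b spR).isSome = spR ∧ (bottomCol a b spR).isSome = spB := by
  obtain ⟨h1, h2⟩ := hadm
  cases a <;> cases b <;> simp [rightCol, bottomCol] at ha hb ⊢ <;>
    subst ha <;> subst hb <;> cases spR <;> cases spB <;> simp_all

lemma admC_col {r : ℕ} (a b : Option (Fin r)) (sp : Bool) :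
    admC r a b (rightCol a b sp) (bottomCol a b sp) := by
  cases a with
  | none =>
    cases b with
    | none => exact Or.inl ⟨rfl, rfl, rfl, rfl⟩
    | some y => exact Or.inr (Or.inr (Or.inr ⟨y, rfl, rfl, rfl, rfl⟩))
  | some x =>
    cases b with
    | none =>
      refine Or.inr (Or.inr (Or.inl ⟨x, rfl, rfl, ?_⟩))
      cases sp <;> simp [rightCol, bottomCol]
    | some y => exact Or.inr (Or.inl ⟨x, y, rfl, rfl, rfl, rfl⟩)

lemma col_determined {r : ℕ} {a b c d : Option (Fin r)} {sp : Bool}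
    (hadm : admC r a b c d) (hc : c.isSome = sp) :
    c = rightCol a b sp ∧ d = bottomCol a b sp := by
  rcases hadm with ⟨ha, hb, hc', hd⟩ | ⟨x, y, ha, hb, hc', hd⟩ |
    ⟨x, ha, hb, ⟨hc', hd⟩ | ⟨hc', hd⟩⟩ | ⟨x, ha, hb, hc', hd⟩ <;>
    subst ha <;> subst hb <;> subst hc' <;> subst hd <;>
    simp [rightCol, bottomCol] at hc ⊢ <;> subst hc <;> simp

lemma col_conserve {r : ℕ} (a b : Option (Fin r)) (sp : Bool) (x : Fin r) :
    ((if a = some x then 1 else 0) + (if b = some x then 1 else 0) : ℕ)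
    = (if rightCol a b sp = some x then 1 else 0)
      + (if bottomCol a b sp = some x then 1 else 0) := by
  cases a with
  | none => cases b <;> simp [rightCol, bottomCol]
  | some u =>
    cases b with
    | none => cases sp <;> simp [rightCol, bottomCol] <;> omega
    | some v =>
      simp only [rightCol, bottomCol]
      rcases le_total u v with h | h
      · simp only [min_eq_left h, max_eq_right h]
      · simp only [min_eq_right h, max_eq_left h]; exact add_comm _ _

lemma admU_of_admC {r : ℕ} {a b c d : Option (Fin r)}
    (hadm : admC r a b c d) : admU a.isSome b.isSome c.isSome d.isSome := by
  rcases hadm with ⟨ha, hb, hc, hd⟩ | ⟨x, y, ha, hb, hc, hd⟩ |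
    ⟨x, ha, hb, ⟨hc, hd⟩ | ⟨hc, hd⟩⟩ | ⟨x, ha, hb, hc, hd⟩ <;>
    subst ha <;> subst hb <;> subst hc <;> subst hd <;> simp [admU]

/-- The coloured horizontal edges of a row, propagated from the left. -/
def rowH {r N : ℕ} (top : Fin (N + 1) → Option (Fin r)) (sH : Fin (N + 2) → Bool) :
    ℕ → Option (Fin r)
  | 0 => none
  | k + 1 => rightCol (rowH top sH k) (top ⟨N - k, by omega⟩)
      (sH ⟨min (k + 1) (N + 1), by omega⟩)

lemma rowH_succ {r N : ℕ} (top : Fin (N + 1) → Option (Fin r)) (sH : Fin (N + 2) → Bool)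
    {k : ℕ} (hk : k ≤ N) :
    rowH top sH (k + 1) = rightCol (rowH top sH k) (top ⟨N - k, by omega⟩)
      (sH ⟨k + 1, by omega⟩) := by
  have : min (k + 1) (N + 1) = k + 1 := by omega
  simp only [rowH, this]

/-- The colours of the top boundary. -/
noncomputable def topColor (r : ℕ) (lam : Fin r → ℕ) (N : ℕ) (j : Fin (N + 1)) :
    Option (Fin r) :=
  if h : ∃ i : Fin r, (j : ℕ) = lam i + (r - 1 - (i : ℕ)) then some h.choose else none

/-- The coloured vertical edges, propagated row by row. -/
noncomputable def VRow {r N : ℕ} {lam : Fin r → ℕ} (s : UState r N lam) :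
    ℕ → Fin (N + 1) → Option (Fin r)
  | 0 => topColor r lam N
  | i + 1 => fun j =>
    if h : i < r then
      bottomCol (rowH (VRow s i) (s.H ⟨i, h⟩) (N - (j : ℕ))) (VRow s i j)
        (s.H ⟨i, h⟩ ⟨N - (j : ℕ) + 1, by omega⟩)
    else none

lemma col_inj {r : ℕ} {lam : Fin r → ℕ} (hdom : ∀ i j : Fin r, i ≤ j → lam j ≤ lam i)
    {i i' : Fin r} (h : lam i + (r - 1 - (i : ℕ)) = lam i' + (r - 1 - (i' : ℕ))) :
    i = i' := by
  rcases lt_trichotomy i i' with hlt | heq | hlt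
  · have h1 := hdom i i' hlt.le
    have h2 : (i : ℕ) < i' := hlt
    have h3 : (i' : ℕ) < r := i'.isLt
    omega
  · exact heq
  · have h1 := hdom i' i hlt.le
    have h2 : (i' : ℕ) < i := hlt
    have h3 : (i : ℕ) < r := i.isLt
    omega

lemma topColor_eq_some {r N : ℕ} {lam : Fin r → ℕ}
    (hdom : ∀ i j : Fin r, i ≤ j → lam j ≤ lam i) (j : Fin (N + 1)) (i : Fin r) :
    topColor r lam N j = some i ↔ (j : ℕ) = lam i + (r - 1 - (i : ℕ)) := by
  unfold topColor
  split
  · next h =>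
    have hs := h.choose_spec
    simp only [Option.some.injEq]
    constructor
    · rintro rfl; exact hs
    · intro hj; exact col_inj hdom (hs.symm.trans hj)
  · next h =>
    simp only [false_iff, reduceCtorEq]
    exact fun hj => h ⟨i, hj⟩


lemma rowH_isSome {r N : ℕ} {lam : Fin r → ℕ} (s : UState r N lam) (i : Fin r)
    (hV : ∀ j, (VRow s (i : ℕ) j).isSome = s.V i.castSucc j) :
    ∀ k, (hk : k ≤ N + 1) →
      (rowH (VRow s (i : ℕ)) (s.H i) k).isSome = s.H i ⟨k, by omega⟩ := by
  intro k
  induction k with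
  | zero =>
    intro _
    simp only [rowH, Option.isSome_none]
    exact (s.left i).symm
  | succ k ih =>
    intro hk
    have hk' : k ≤ N := by omega
    rw [rowH_succ _ _ hk']
    have hadm := s.adm i ⟨N - k, by omega⟩
    simp only [show N - (N - k) = k from by omega] at hadm
    exact (col_isSome (ih (by omega)) (hV ⟨N - k, by omega⟩) hadm).1

lemma VRow_isSome {r N : ℕ} {lam : Fin r → ℕ} (s : UState r N lam) :
    ∀ i, (hi : i ≤ r) → ∀ j, (VRow s i j).isSome = s.V ⟨i, by omega⟩ j := by
  intro i
  induction i with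
  | zero =>
    intro _ j
    have ht := s.top j
    show (topColor r lam N j).isSome = _
    unfold topColor
    split
    · next h => simp only [Option.isSome_some]; exact (ht.mpr h).symm
    · next h =>
      simp only [Option.isSome_none]
      cases hv : s.V 0 j
      · exact hv.symm
      · exact absurd (ht.mp hv) h
  | succ i ih =>
    intro hi j
    have h : i < r := by omega
    have hV : ∀ j, (VRow s i j).isSome = s.V (⟨i, h⟩ : Fin r).castSucc j :=
      fun j => ih (by omega) j
    show (VRow s (i + 1) j).isSome = _
    unfold VRow
    rw [dif_pos h]
    have ha := rowH_isSome s ⟨i, h⟩ hV (N - (j : ℕ)) (by omega)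
    have hadm := s.adm ⟨i, h⟩ j
    exact (col_isSome ha (hV j) hadm).2


lemma VRow_succ {r N : ℕ} {lam : Fin r → ℕ} (s : UState r N lam) {i : ℕ} (h : i < r)
    (j : Fin (N + 1)) :
    VRow s (i + 1) j = bottomCol (rowH (VRow s i) (s.H ⟨i, h⟩) (N - (j : ℕ)))
      (VRow s i j) (s.H ⟨i, h⟩ ⟨N - (j : ℕ) + 1, by omega⟩) := by
  show dite _ _ _ = _
  rw [dif_pos h]

lemma row_conserve {r N : ℕ} (top : Fin (N + 1) → Option (Fin r)) (sH : Fin (N + 2) → Bool)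
    (x : Fin r) :
    ∑ j : Fin (N + 1), (if top j = some x then 1 else 0 : ℕ)
    = (if rowH top sH (N + 1) = some x then 1 else 0)
      + ∑ j : Fin (N + 1), (if bottomCol (rowH top sH (N - (j : ℕ))) (top j)
          (sH ⟨N - (j : ℕ) + 1, by omega⟩) = some x then 1 else 0 : ℕ) := by
  set f : ℕ → ℕ := fun k => if rowH top sH k = some x then 1 else 0 with hf
  have point : ∀ j : Fin (N + 1),
      f (N - (j : ℕ)) + (if top j = some x then 1 else 0)
      = f (N - (j : ℕ) + 1) + (if bottomCol (rowH top sH (N - (j : ℕ))) (top j)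
          (sH ⟨N - (j : ℕ) + 1, by omega⟩) = some x then 1 else 0 : ℕ) := by
    intro j
    have hj : (j : ℕ) ≤ N := by omega
    have e : (⟨N - (N - (j : ℕ)), by omega⟩ : Fin (N + 1)) = j := Fin.ext (by simp; omega)
    simp only [hf]
    rw [rowH_succ top sH (show N - (j : ℕ) ≤ N by omega)]
    simp only [e]
    exact col_conserve _ _ _ x
  have hsum : (∑ j : Fin (N + 1), f (N - (j : ℕ)))
        + ∑ j : Fin (N + 1), (if top j = some x then 1 else 0 : ℕ)
      = (∑ j : Fin (N + 1), f (N - (j : ℕ) + 1))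
        + ∑ j : Fin (N + 1), (if bottomCol (rowH top sH (N - (j : ℕ))) (top j)
            (sH ⟨N - (j : ℕ) + 1, by omega⟩) = some x then 1 else 0 : ℕ) := by
    rw [← Finset.sum_add_distrib, ← Finset.sum_add_distrib]
    exact Finset.sum_congr rfl fun j _ => point j
  have h1 : ∑ j : Fin (N + 1), f (N - (j : ℕ)) = ∑ k ∈ Finset.range (N + 1), f k := by
    rw [Fin.sum_univ_eq_sum_range (fun k => f (N - k)) (N + 1)]
    have := Finset.sum_range_reflect f (N + 1)
    simpa using this
  have h2 : ∑ j : Fin (N + 1), f (N - (j : ℕ) + 1)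
      = ∑ k ∈ Finset.range (N + 1), f (k + 1) := by
    rw [Fin.sum_univ_eq_sum_range (fun k => f (N - k + 1)) (N + 1)]
    have := Finset.sum_range_reflect (fun k => f (k + 1)) (N + 1)
    simpa using this
  have h3 : ∑ k ∈ Finset.range (N + 1), f k
      = (∑ k ∈ Finset.range N, f (k + 1)) + f 0 := Finset.sum_range_succ' f N
  have h4 : ∑ k ∈ Finset.range (N + 1), f (k + 1)
      = (∑ k ∈ Finset.range N, f (k + 1)) + f (N + 1) :=
    Finset.sum_range_succ (fun k => f (k + 1)) N
  have h0 : f 0 = 0 := by simp [hf, rowH]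
  have h5 : f (N + 1) = if rowH top sH (N + 1) = some x then 1 else 0 := rfl
  omega

lemma grid_conserve {r N : ℕ} {lam : Fin r → ℕ} (s : UState r N lam) (x : Fin r) :
    ∀ i, i ≤ r →
      ∑ j : Fin (N + 1), (if VRow s 0 j = some x then 1 else 0 : ℕ)
      = (∑ j : Fin (N + 1), (if VRow s i j = some x then 1 else 0 : ℕ))
        + ∑ i' ∈ Finset.range i, (if h : i' < r then
            (if rowH (VRow s i') (s.H ⟨i', h⟩) (N + 1) = some x then 1 else 0) else 0) := by
  intro i
  induction i with
  | zero => intro _; simp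
  | succ i ih =>
    intro hi
    have h : i < r := by omega
    rw [ih (by omega), Finset.sum_range_succ, dif_pos h]
    have hrow := row_conserve (VRow s i) (s.H ⟨i, h⟩) x
    have hbot : ∀ j : Fin (N + 1),
        (if VRow s (i + 1) j = some x then 1 else 0 : ℕ)
        = (if bottomCol (rowH (VRow s i) (s.H ⟨i, h⟩) (N - (j : ℕ))) (VRow s i j)
            (s.H ⟨i, h⟩ ⟨N - (j : ℕ) + 1, by omega⟩) = some x then 1 else 0 : ℕ) := by
      intro j; rw [VRow_succ s h j]
    rw [Finset.sum_congr rfl fun j _ => hbot j]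
    omega


lemma top_count {r N : ℕ} {lam : Fin r → ℕ} (hr : 0 < r)
    (hdom : ∀ i j : Fin r, i ≤ j → lam j ≤ lam i) (hN : lam ⟨0, hr⟩ + r - 1 ≤ N)
    (x : Fin r) :
    ∑ j : Fin (N + 1), (if topColor r lam N j = some x then 1 else 0 : ℕ) = 1 := by
  have hx : (x : ℕ) < r := x.isLt
  have hle : lam x ≤ lam ⟨0, hr⟩ := hdom ⟨0, hr⟩ x (Fin.le_def.mpr (Nat.zero_le _))
  have hcol : lam x + (r - 1 - (x : ℕ)) ≤ N := by omega
  set j0 : Fin (N + 1) := ⟨lam x + (r - 1 - (x : ℕ)), by omega⟩ with hj0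
  have hiff : ∀ j : Fin (N + 1), (topColor r lam N j = some x) ↔ j = j0 := by
    intro j
    rw [topColor_eq_some hdom]
    constructor
    · intro h; exact Fin.ext h
    · rintro rfl; rfl
  rw [Finset.sum_congr rfl fun j _ => if_congr (hiff j) rfl rfl]
  simp

lemma VRow_last {r N : ℕ} {lam : Fin r → ℕ} (s : UState r N lam) (j : Fin (N + 1)) :
    VRow s r j = none := by
  have := VRow_isSome s r le_rfl j
  rw [show (⟨r, by omega⟩ : Fin (r + 1)) = Fin.last r from rfl, s.bottom j] at this
  exact Option.not_isSome_iff_eq_none.mp (by rw [this]; exact Bool.false_ne_true)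

/-- Each colour exits exactly once on the right boundary. -/
lemma right_count {r N : ℕ} {lam : Fin r → ℕ} (hr : 0 < r)
    (hdom : ∀ i j : Fin r, i ≤ j → lam j ≤ lam i) (hN : lam ⟨0, hr⟩ + r - 1 ≤ N)
    (s : UState r N lam) (x : Fin r) :
    ∃ i : Fin r, rowH (VRow s (i : ℕ)) (s.H i) (N + 1) = some x := by
  have hcons := grid_conserve s x r le_rfl
  have hz : ∀ j : Fin (N + 1), (if VRow s r j = some x then 1 else 0 : ℕ) = 0 := by
    intro j; rw [VRow_last s j]; simp
  rw [Finset.sum_congr rfl fun j _ => hz j, Finset.sum_const_zero, zero_add] at hcons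
  have htop : ∑ j : Fin (N + 1), (if VRow s 0 j = some x then 1 else 0 : ℕ) = 1 :=
    top_count hr hdom hN x
  rw [htop] at hcons
  by_contra hc
  push_neg at hc
  have : ∑ i' ∈ Finset.range r, (if h : i' < r then
      (if rowH (VRow s i') (s.H ⟨i', h⟩) (N + 1) = some x then 1 else 0) else 0) = 0 := by
    apply Finset.sum_eq_zero
    intro i' hi'
    have h : i' < r := Finset.mem_range.mp hi'
    rw [dif_pos h, if_neg (hc ⟨i', h⟩)]
  omega


lemma rowdet {r N : ℕ} {lam : Fin r → ℕ} {w' : Equiv.Perm (Fin r)}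
    (sc' : CState r N lam w') (s : UState r N lam) (hu : Uncolors sc' s) (i : Fin r)
    (hP : ∀ j, sc'.V i.castSucc j = VRow s (i : ℕ) j) :
    ∀ k, (hk : k ≤ N + 1) → sc'.H i ⟨k, by omega⟩ = rowH (VRow s (i : ℕ)) (s.H i) k := by
  intro k
  induction k with
  | zero => intro _; exact (sc'.left i).trans rfl
  | succ k ih =>
    intro hk
    have hk' : k ≤ N := by omega
    have hadm := sc'.adm i ⟨N - k, by omega⟩
    simp only [show N - (N - k) = k from by omega] at hadm
    rw [ih (by omega), hP ⟨N - k, by omega⟩] at hadm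
    have hc : (sc'.H i ⟨k + 1, by omega⟩).isSome = s.H i ⟨k + 1, by omega⟩ :=
      hu.2 i ⟨k + 1, by omega⟩
    have := (col_determined hadm hc).1
    rw [this, rowH_succ _ _ hk']

lemma rowdetV {r N : ℕ} {lam : Fin r → ℕ} {w' : Equiv.Perm (Fin r)}
    (sc' : CState r N lam w') (s : UState r N lam) (hu : Uncolors sc' s) (i : Fin r)
    (hP : ∀ j, sc'.V i.castSucc j = VRow s (i : ℕ) j) :
    ∀ j, sc'.V i.succ j = VRow s ((i : ℕ) + 1) j := by
  intro j
  have hadm := sc'.adm i j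
  rw [rowdet sc' s hu i hP (N - (j : ℕ)) (by omega), hP j] at hadm
  have hc : (sc'.H i ⟨N - (j : ℕ) + 1, by omega⟩).isSome
      = s.H i ⟨N - (j : ℕ) + 1, by omega⟩ := hu.2 i _
  have := (col_determined hadm hc).2
  rw [this, VRow_succ s i.isLt j]

lemma unique_V {r N : ℕ} {lam : Fin r → ℕ} {w' : Equiv.Perm (Fin r)}
    (hdom : ∀ i j : Fin r, i ≤ j → lam j ≤ lam i)
    (sc' : CState r N lam w') (s : UState r N lam) (hu : Uncolors sc' s) :
    ∀ i, (hi : i ≤ r) → ∀ j, sc'.V ⟨i, by omega⟩ j = VRow s i j := by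
  intro i
  induction i with
  | zero =>
    intro _ j
    show sc'.V 0 j = VRow s 0 j
    cases hv : sc'.V 0 j with
    | none =>
      have h1 : (VRow s 0 j).isSome = s.V 0 j := VRow_isSome s 0 (Nat.zero_le r) j
      have h2 : (sc'.V 0 j).isSome = s.V 0 j := hu.1 0 j
      rw [hv] at h2
      have h3 : (VRow s 0 j).isSome = false := by rw [h1]; exact h2.symm
      exact (Option.not_isSome_iff_eq_none.mp (by simp [h3])).symm
    | some i0 =>
      have hj := (sc'.top i0 j).mp hv
      exact ((topColor_eq_some hdom j i0).mpr hj).symm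
  | succ i ih =>
    intro hi j
    have h : i < r := by omega
    have hP : ∀ j, sc'.V (⟨i, h⟩ : Fin r).castSucc j = VRow s i j := fun j => ih (by omega) j
    exact rowdetV sc' s hu ⟨i, h⟩ hP j

lemma unique_H {r N : ℕ} {lam : Fin r → ℕ} {w' : Equiv.Perm (Fin r)}
    (hdom : ∀ i j : Fin r, i ≤ j → lam j ≤ lam i)
    (sc' : CState r N lam w') (s : UState r N lam) (hu : Uncolors sc' s) :
    ∀ (i : Fin r) (k : Fin (N + 2)), sc'.H i k = rowH (VRow s (i : ℕ)) (s.H i) (k : ℕ) := by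
  intro i k
  have hP : ∀ j, sc'.V i.castSucc j = VRow s (i : ℕ) j := fun j =>
    unique_V hdom sc' s hu (i : ℕ) (le_of_lt i.isLt) j
  have := rowdet sc' s hu i hP (k : ℕ) (by omega)
  rwa [show (⟨(k : ℕ), by omega⟩ : Fin (N + 2)) = k from Fin.ext rfl] at this


lemma outColor_isSome {r N : ℕ} {lam : Fin r → ℕ} (s : UState r N lam) (i : Fin r) :
    (rowH (VRow s (i : ℕ)) (s.H i) (N + 1)).isSome := by
  have hV : ∀ j, (VRow s (i : ℕ) j).isSome = s.V i.castSucc j := fun j =>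
    VRow_isSome s (i : ℕ) (le_of_lt i.isLt) j
  rw [rowH_isSome s i hV (N + 1) le_rfl]
  exact s.right i

lemma build_adm {r N : ℕ} {lam : Fin r → ℕ} (s : UState r N lam) (i : Fin r)
    (j : Fin (N + 1)) :
    admC r (rowH (VRow s (i : ℕ)) (s.H i) (N - (j : ℕ))) (VRow s (i : ℕ) j)
      (rowH (VRow s (i : ℕ)) (s.H i) (N - (j : ℕ) + 1)) (VRow s ((i : ℕ) + 1) j) := by
  have e2 : (⟨N - (N - (j : ℕ)), by omega⟩ : Fin (N + 1)) = j := Fin.ext (by simp; omega)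
  rw [rowH_succ _ _ (show N - (j : ℕ) ≤ N by omega), VRow_succ s i.isLt j]
  simp only [e2, Fin.eta]
  exact admC_col _ _ _

lemma CState.ext' {r N : ℕ} {lam : Fin r → ℕ} {w : Equiv.Perm (Fin r)}
    {c1 c2 : CState r N lam w} (hV : ∀ i j, c1.V i j = c2.V i j)
    (hH : ∀ i k, c1.H i k = c2.H i k) : c1 = c2 := by
  cases c1; cases c2
  simp only [CState.mk.injEq]
  exact ⟨funext fun i => funext (hV i), funext fun i => funext (hH i)⟩

lemma UState.ext' {r N : ℕ} {lam : Fin r → ℕ}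
    {c1 c2 : UState r N lam} (hV : ∀ i j, c1.V i j = c2.V i j)
    (hH : ∀ i k, c1.H i k = c2.H i k) : c1 = c2 := by
  cases c1; cases c2
  simp only [UState.mk.injEq]
  exact ⟨funext fun i => funext (hV i), funext fun i => funext (hH i)⟩

lemma exists_colored {r N : ℕ} {lam : Fin r → ℕ} (hr : 0 < r)
    (hdom : ∀ i j : Fin r, i ≤ j → lam j ≤ lam i) (hN : lam ⟨0, hr⟩ + r - 1 ≤ N)
    (s : UState r N lam) :
    ∃ p : (w : Equiv.Perm (Fin r)) × CState r N lam w, Uncolors p.2 s ∧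
      (∀ (i : Fin r) (k : Fin (N + 2)),
        p.2.H i k = rowH (VRow s (i : ℕ)) (s.H i) (k : ℕ)) := by
  have hsome := outColor_isSome s
  set g : Fin r → Fin r :=
    fun i => (rowH (VRow s (i : ℕ)) (s.H i) (N + 1)).get (hsome i) with hgdef
  have hg : ∀ i : Fin r, rowH (VRow s (i : ℕ)) (s.H i) (N + 1) = some (g i) := fun i =>
    (Option.some_get (hsome i)).symm
  have hsurj : Function.Surjective g := by
    intro x
    obtain ⟨i, hi⟩ := right_count hr hdom hN s x
    refine ⟨i, ?_⟩
    rw [hg i] at hi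
    exact Option.some_injective _ hi
  have hbij : Function.Bijective g := Finite.surjective_iff_bijective.mp hsurj
  refine ⟨⟨(Equiv.ofBijective g hbij)⁻¹,
    { V := fun i j => VRow s (i : ℕ) j
      H := fun i k => rowH (VRow s (i : ℕ)) (s.H i) (k : ℕ)
      top := fun i j => topColor_eq_some hdom j i
      bottom := fun j => VRow_last s j
      left := fun i => rfl
      right := fun i => hg i
      adm := fun i j => build_adm s i j }⟩, ⟨?_, ?_⟩, fun i k => rfl⟩
  · intro i j
    exact VRow_isSome s (i : ℕ) (by omega) j
  · intro i k
    have hV : ∀ j, (VRow s (i : ℕ) j).isSome = s.V i.castSucc j := fun j =>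
      VRow_isSome s (i : ℕ) (le_of_lt i.isLt) j
    exact rowH_isSome s i hV (k : ℕ) (by omega)

lemma part_one {r N : ℕ} {lam : Fin r → ℕ} (hr : 0 < r)
    (hdom : ∀ i j : Fin r, i ≤ j → lam j ≤ lam i) (hN : lam ⟨0, hr⟩ + r - 1 ≤ N)
    (s : UState r N lam) :
    ∃! p : (w : Equiv.Perm (Fin r)) × CState r N lam w, Uncolors p.2 s := by
  obtain ⟨⟨w0, c0⟩, hp, hpH⟩ := exists_colored hr hdom hN s
  refine ⟨⟨w0, c0⟩, hp, ?_⟩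
  rintro ⟨w1, c1⟩ hq
  have hH1 := unique_H hdom c1 s hq
  have hH0 := hpH
  have hw : w1 = w0 := by
    have hinv : ∀ i : Fin r, w1⁻¹ i = w0⁻¹ i := by
      intro i
      have e1 := c1.right i
      have e0 := c0.right i
      rw [hH1 i (Fin.last (N + 1))] at e1
      rw [hH0 i (Fin.last (N + 1))] at e0
      exact Option.some_injective _ (e1.symm.trans e0)
    exact inv_injective (Equiv.ext hinv)
  subst hw
  have hV1 := unique_V hdom c1 s hq
  have hV0 := unique_V hdom c0 s hp
  have : c1 = c0 := by
    refine CState.ext' (fun i j => ?_) (fun i k => ?_)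
    · exact (hV1 (i : ℕ) (by omega) j).trans (hV0 (i : ℕ) (by omega) j).symm
    · exact (hH1 i k).trans (hH0 i k).symm
  rw [this]


/-- Forgetting the colours of a coloured state. -/
def uncolorOf {r N : ℕ} {lam : Fin r → ℕ} {w : Equiv.Perm (Fin r)}
    (sc : CState r N lam w) : UState r N lam where
  V := fun i j => (sc.V i j).isSome
  H := fun i k => (sc.H i k).isSome
  top := fun j => by
    constructor
    · intro h
      obtain ⟨i0, hi0⟩ := Option.isSome_iff_exists.mp h
      exact ⟨i0, (sc.top i0 j).mp hi0⟩
    · rintro ⟨i0, hi0⟩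
      rw [Option.isSome_iff_exists]
      exact ⟨i0, (sc.top i0 j).mpr hi0⟩
  bottom := fun j => by show (sc.V _ _).isSome = _; rw [sc.bottom]; rfl
  left := fun i => by show (sc.H _ _).isSome = _; rw [sc.left]; rfl
  right := fun i => by show (sc.H _ _).isSome = _; rw [sc.right]; rfl
  adm := fun i j => admU_of_admC (sc.adm i j)

lemma uncolors_uncolorOf {r N : ℕ} {lam : Fin r → ℕ} {w : Equiv.Perm (Fin r)}
    (sc : CState r N lam w) : Uncolors sc (uncolorOf sc) :=
  ⟨fun _ _ => rfl, fun _ _ => rfl⟩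

instance UState.finite {r N : ℕ} {lam : Fin r → ℕ} : Finite (UState r N lam) := by
  apply Finite.of_injective (fun s : UState r N lam => (s.V, s.H))
  intro a b h
  simp only [Prod.mk.injEq] at h
  exact UState.ext' (fun i j => by rw [h.1]) (fun i k => by rw [h.2])

instance CState.finite {r N : ℕ} {lam : Fin r → ℕ} {w : Equiv.Perm (Fin r)} :
    Finite (CState r N lam w) := by
  apply Finite.of_injective (fun s : CState r N lam w => (s.V, s.H))
  intro a b h
  simp only [Prod.mk.injEq] at h
  exact CState.ext' (fun i j => by rw [h.1]) (fun i k => by rw [h.2])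

lemma weight_eq {r N : ℕ} {lam : Fin r → ℕ} {w : Equiv.Perm (Fin r)}
    {sc : CState r N lam w} {s : UState r N lam} (hu : Uncolors sc s) :
    uweight s = cweight sc := by
  unfold uweight cweight
  refine Finset.prod_congr rfl fun i _ => Finset.prod_congr rfl fun k _ => ?_
  rw [hu.2 i k.castSucc]


end ColorAux

/-- In any state of the colored five-vertex model, the colouring is uniquely
determined by the uncolored state: given an admissible uncolored state (with the
prescribed top boundary colours), there is exactly one pair `(w, colored state)`
projecting to it.  Consequently the uncolored ensemble decomposes as the disjoint
union of the colored ensembles over `w ∈ S_r`, and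
`Z(S_{z,λ}) = Σ_{w ∈ S_r} Z(S_{z,λ,w})`. -/
theorem colored_decomposition (r N : ℕ) (hr : 0 < r) (lam : Fin r → ℕ)
    (hdom : ∀ i j : Fin r, i ≤ j → lam j ≤ lam i) (hN : lam ⟨0, hr⟩ + r - 1 ≤ N) :
    (∀ s : UState r N lam,
      ∃! p : (w : Equiv.Perm (Fin r)) × CState r N lam w, Uncolors p.2 s) ∧
    Zpart r N lam = ∑ w : Equiv.Perm (Fin r), Zcol r N lam w := by
  have hex : ∀ s : UState r N lam,
      ∃! p : (w : Equiv.Perm (Fin r)) × CState r N lam w, Uncolors p.2 s :=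
    fun s => part_one hr hdom hN s
  refine ⟨hex, ?_⟩
  letI : Fintype (UState r N lam) := Fintype.ofFinite _
  letI : ∀ w : Equiv.Perm (Fin r), Fintype (CState r N lam w) := fun w => Fintype.ofFinite _
  set F : UState r N lam → (w : Equiv.Perm (Fin r)) × CState r N lam w :=
    fun s => (hex s).choose with hFdef
  have hFspec : ∀ s, Uncolors (F s).2 s := fun s => (hex s).choose_spec.1
  have hFuniq : ∀ s q, Uncolors q.2 s → q = F s := fun s q h => (hex s).choose_spec.2 q h
  have hbij : Function.Bijective F := by
    constructor
    · intro a b hab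
      have h1 := hFspec a
      have h2 := hFspec b
      rw [hab] at h1
      refine UState.ext' (fun i j => ?_) (fun i k => ?_)
      · rw [← h1.1 i j, ← h2.1 i j]
      · rw [← h1.2 i k, ← h2.2 i k]
    · intro q
      exact ⟨uncolorOf q.2, (hFuniq _ q (uncolors_uncolorOf q.2)).symm⟩
  have h0 : Zpart r N lam = ∑ s : UState r N lam, uweight s := finsum_eq_sum_of_fintype _
  have h1 : ∀ w : Equiv.Perm (Fin r),
      Zcol r N lam w = ∑ sc : CState r N lam w, cweight sc :=
    fun w => finsum_eq_sum_of_fintype _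
  rw [h0]
  calc ∑ s : UState r N lam, uweight s
      = ∑ s : UState r N lam, cweight (F s).2 :=
        Finset.sum_congr rfl fun s _ => weight_eq (hFspec s)
    _ = ∑ p : (w : Equiv.Perm (Fin r)) × CState r N lam w, cweight p.2 :=
        Fintype.sum_bijective F hbij _ _ (fun s => rfl)
    _ = ∑ w : Equiv.Perm (Fin r), ∑ sc : CState r N lam w, cweight sc := by
        rw [← Finset.univ_sigma_univ, Finset.sum_sigma]
    _ = ∑ w : Equiv.Perm (Fin r), Zcol r N lam w :=
        Finset.sum_congr rfl fun w _ => (h1 w).symm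
end
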